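/- For all natural numbers n and k with k ≤ n, the number of abelian squares (w, w') of size n over a 3-letter alphabet with no position at which both w and w' have the letter 1, and in which the letter 1 occurs exactly n−k times in w, equals C(n,k)^2 · C(2k,n). Formally: the number of pairs of words w, w' : Fin n → Fin 3 such that every letter c ∈ Fin 3 occurs equally often in w and in w', there is no position i with w(i) = 0 and w'(i) = 0, and the number of positions i with w(i) = 0 is n−k, equals C(n,k)^2 · C(2k,n). -/

import Mathlib

open Finset

variable {α : Type*} [Fintype α] [DecidableEq α]

def wd (A S : Finset α) : α → Fin 3 := fun i => if i ∈ A then 0 else if i ∈ S then 1 else 2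

lemma wd_zero (A S : Finset α) : univ.filter (fun i => wd A S i = 0) = A := by
  ext i
  rw [mem_filter]
  simp only [mem_filter, mem_univ, true_and, wd]
  split_ifs with h1 h2 <;> simp_all

lemma wd_one (A S : Finset α) (h : S ⊆ Aᶜ) : univ.filter (fun i => wd A S i = 1) = S := by
  ext i
  rw [mem_filter]
  simp only [mem_filter, mem_univ, true_and, wd]
  split_ifs with h1 h2 <;> simp_all
  exact fun hS => (mem_compl.mp (h hS)) h1

lemma wd_two (A S : Finset α) : univ.filter (fun i => wd A S i = 2) = (A ∪ S)ᶜ := by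
  ext i
  rw [mem_filter]
  simp only [mem_filter, mem_univ, true_and, wd, mem_compl, mem_union]
  split_ifs with h1 h2 <;> simp_all

lemma sum_choose_sq (k : ℕ) :
    ∑ j ∈ range (k + 1), k.choose j * k.choose j = (2 * k).choose k := by
  rw [two_mul, Nat.add_choose_eq, Finset.Nat.sum_antidiagonal_eq_sum_range_succ_mk]
  refine sum_congr rfl fun j hj => ?_
  rw [Nat.choose_symm (Nat.lt_succ_iff.mp (mem_range.mp hj))]

omit [Fintype α] [DecidableEq α] in
lemma card_eqcard_pairs (s t : Finset α) :
    (((s.powerset ×ˢ t.powerset)).filter (fun p => p.1.card = p.2.card)).card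
      = ∑ j ∈ range (s.card + 1), s.card.choose j * t.card.choose j := by
  rw [card_eq_sum_card_fiberwise (f := fun p => p.1.card) (t := range (s.card + 1))
    (fun p hp => by
      simp only [mem_coe, mem_filter, mem_product, mem_powerset] at hp
      exact mem_range.mpr (Nat.lt_succ_of_le (card_le_card hp.1.1)))]
  refine sum_congr rfl fun j hj => ?_
  have : ((s.powerset ×ˢ t.powerset).filter (fun p => p.1.card = p.2.card)).filter
      (fun p => p.1.card = j) = s.powersetCard j ×ˢ t.powersetCard j := by
    ext p
    simp only [mem_filter, mem_product, mem_powerset, mem_powersetCard]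
    constructor
    · rintro ⟨⟨⟨h1, h2⟩, h3⟩, h4⟩
      exact ⟨⟨h1, h4⟩, ⟨h2, h3 ▸ h4⟩⟩
    · rintro ⟨⟨h1, h2⟩, h3, h4⟩
      exact ⟨⟨⟨h1, h3⟩, h2.trans h4.symm⟩, h2⟩
  rw [this, card_product, card_powersetCard, card_powersetCard]

lemma arith (n k : ℕ) (hk : k ≤ n) :
    k.choose (n - k) * (2 * k).choose k = n.choose k * (2 * k).choose n := by
  rcases le_or_gt n (2 * k) with h | h
  · have h1 : k.choose (n-k) * ((n-k).factorial * (2*k-n).factorial) = k.factorial := by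
      have e := Nat.choose_mul_factorial_mul_factorial (show n - k ≤ k by omega)
      rw [show k - (n - k) = 2*k - n by omega] at e
      rw [← e]; ring
    have h2 : (2*k).choose k * (k.factorial * k.factorial) = (2*k).factorial := by
      have e := Nat.choose_mul_factorial_mul_factorial (show k ≤ 2*k by omega)
      rw [show 2*k - k = k by omega] at e
      rw [← e]; ring
    have h3 : n.choose k * (k.factorial * (n-k).factorial) = n.factorial := by
      have e := Nat.choose_mul_factorial_mul_factorial hk
      rw [← e]; ring
    have h4 : (2*k).choose n * (n.factorial * (2*k-n).factorial) = (2*k).factorial := by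
      have e := Nat.choose_mul_factorial_mul_factorial h
      rw [← e]; ring
    have M : 0 < (n-k).factorial * (2*k-n).factorial * (k.factorial * k.factorial) :=
      by positivity
    apply Nat.eq_of_mul_eq_mul_right M
    calc k.choose (n-k) * (2*k).choose k * ((n-k).factorial * (2*k-n).factorial * (k.factorial * k.factorial))
        = (k.choose (n-k) * ((n-k).factorial * (2*k-n).factorial)) * ((2*k).choose k * (k.factorial * k.factorial)) := by ring
      _ = k.factorial * (2*k).factorial := by rw [h1, h2]
      _ = ((2*k).choose n * (n.factorial * (2*k-n).factorial)) * k.factorial := by rw [h4]; ring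
      _ = ((2*k).choose n * ((n.choose k * (k.factorial * (n-k).factorial)) * (2*k-n).factorial)) * k.factorial := by rw [h3]
      _ = n.choose k * (2*k).choose n * ((n-k).factorial * (2*k-n).factorial * (k.factorial * k.factorial)) := by ring
  · rw [Nat.choose_eq_zero_of_lt (show k < n - k by omega),
      Nat.choose_eq_zero_of_lt h, zero_mul, mul_zero]

theorem abelian_squares_no_common_one_count_by_ones (n k : ℕ) (hk : k ≤ n) :
    ((Finset.univ : Finset ((Fin n → Fin 3) × (Fin n → Fin 3))).filter (fun p =>
        (∀ c : Fin 3,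
          (Finset.univ.filter (fun i => p.1 i = c)).card
            = (Finset.univ.filter (fun i => p.2 i = c)).card) ∧
        (¬ ∃ i : Fin n, p.1 i = 0 ∧ p.2 i = 0) ∧
        (Finset.univ.filter (fun i => p.1 i = 0)).card = n - k)).card
      = (n.choose k) ^ 2 * (2 * k).choose n := by
  classical
  set T : Finset (Σ _ : Finset (Fin n), Σ _ : Finset (Fin n), Finset (Fin n) × Finset (Fin n)) :=
    (univ.powersetCard (n - k)).sigma (fun A =>
      ((Aᶜ).powersetCard (n - k)).sigma (fun B =>
        ((Aᶜ.powerset ×ˢ Bᶜ.powerset)).filter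
          (fun p : Finset (Fin n) × Finset (Fin n) => p.1.card = p.2.card))) with hT
  have hbij : ((Finset.univ : Finset ((Fin n → Fin 3) × (Fin n → Fin 3))).filter (fun p =>
        (∀ c : Fin 3,
          (Finset.univ.filter (fun i => p.1 i = c)).card
            = (Finset.univ.filter (fun i => p.2 i = c)).card) ∧
        (¬ ∃ i : Fin n, p.1 i = 0 ∧ p.2 i = 0) ∧
        (Finset.univ.filter (fun i => p.1 i = 0)).card = n - k)).card = T.card := by
    refine card_bij'
      (fun p _ => ⟨univ.filter (fun i => p.1 i = 0), univ.filter (fun i => p.2 i = 0),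
        (univ.filter (fun i => p.1 i = 1), univ.filter (fun i => p.2 i = 1))⟩)
      (fun q _ => (wd q.1 q.2.2.1, wd q.2.1 q.2.2.2)) ?_ ?_ ?_ ?_
    · -- maps into T
      rintro p hp
      simp only [mem_filter, mem_univ, true_and] at hp
      obtain ⟨hcount, hno, hcard⟩ := hp
      rw [hT]
      simp only [mem_sigma, mem_powersetCard, mem_filter, mem_product, mem_powerset]
      refine ⟨⟨subset_univ _, hcard⟩, ⟨?_, by rw [← hcount 0]; exact hcard⟩, ⟨?_, ?_⟩, hcount 1⟩
      · intro i hi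
        simp only [mem_filter, mem_univ, true_and] at hi
        simp only [mem_compl, mem_filter, mem_univ, true_and]
        exact fun h0 => hno ⟨i, h0, hi⟩
      · intro i hi
        simp only [mem_filter, mem_univ, true_and] at hi
        simp only [mem_compl, mem_filter, mem_univ, true_and, hi]
        decide
      · intro i hi
        simp only [mem_filter, mem_univ, true_and] at hi
        simp only [mem_compl, mem_filter, mem_univ, true_and, hi]
        decide
    · -- maps back
      rintro ⟨A, B, S, Tt⟩ hq
      rw [hT] at hq
      simp only [mem_sigma, mem_powersetCard, mem_filter, mem_product, mem_powerset] at hq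
      obtain ⟨⟨-, hA⟩, ⟨hBsub, hB⟩, ⟨hS, hTt⟩, hST⟩ := hq
      have hdAS : Disjoint A S := disjoint_left.mpr (fun a ha haS => (mem_compl.mp (hS haS)) ha)
      have hdBT : Disjoint B Tt := disjoint_left.mpr (fun a ha haT => (mem_compl.mp (hTt haT)) ha)
      simp only [mem_filter, mem_univ, true_and]
      refine ⟨?_, ?_, ?_⟩
      · intro c
        have h3 : ∀ v : Fin 3, v = 0 ∨ v = 1 ∨ v = 2 := by decide
        rcases h3 c with rfl | rfl | rfl
        · rw [wd_zero, wd_zero, hA, hB]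
        · rw [wd_one A S hS, wd_one B Tt hTt, hST]
        · rw [wd_two, wd_two, card_compl, card_compl,
            card_union_of_disjoint hdAS, card_union_of_disjoint hdBT, hA, hB, hST]
      · rintro ⟨i, h1, h2⟩
        have hiA : i ∈ A := by
          rw [← wd_zero A S]; simp only [mem_filter, mem_univ, true_and]; exact h1
        have hiB : i ∈ B := by
          rw [← wd_zero B Tt]; simp only [mem_filter, mem_univ, true_and]; exact h2
        exact (mem_compl.mp (hBsub hiB)) hiA
      · rw [wd_zero]; exact hA
    · -- left inverse
      rintro p hp
      have h3 : ∀ v : Fin 3, v = 0 ∨ v = 1 ∨ v = 2 := by decide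
      refine Prod.ext ?_ ?_ <;> funext i <;>
        simp only [wd, mem_filter, mem_univ, true_and] <;>
        rcases h3 (p.1 i) with h | h | h <;> rcases h3 (p.2 i) with h' | h' | h' <;>
        simp [h, h']
    · -- right inverse
      rintro ⟨A, B, S, Tt⟩ hq
      rw [hT] at hq
      simp only [mem_sigma, mem_powersetCard, mem_filter, mem_product, mem_powerset] at hq
      obtain ⟨⟨-, hA⟩, ⟨hBsub, hB⟩, ⟨hS, hTt⟩, hST⟩ := hq
      simp only
      rw [wd_zero, wd_zero, wd_one A S hS, wd_one B Tt hTt]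
  rw [hbij, hT, card_sigma]
  have hstep : ∀ A ∈ univ.powersetCard (n - k),
      (((Aᶜ).powersetCard (n - k)).sigma (fun B =>
        ((Aᶜ.powerset ×ˢ Bᶜ.powerset)).filter
          (fun p : Finset (Fin n) × Finset (Fin n) => p.1.card = p.2.card))).card
      = k.choose (n - k) * (2 * k).choose k := by
    intro A hA
    rw [mem_powersetCard_univ] at hA
    have hAc : (Aᶜ).card = k := by
      rw [card_compl, hA, Fintype.card_fin]; omega
    rw [card_sigma]
    have hinner : ∀ B ∈ (Aᶜ).powersetCard (n - k),
        (((Aᶜ.powerset ×ˢ Bᶜ.powerset)).filter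
          (fun p : Finset (Fin n) × Finset (Fin n) => p.1.card = p.2.card)).card
        = (2 * k).choose k := by
      intro B hB
      rw [mem_powersetCard] at hB
      have hBc : (Bᶜ).card = k := by
        rw [card_compl, hB.2, Fintype.card_fin]; omega
      rw [card_eqcard_pairs, hAc, hBc, sum_choose_sq]
    rw [sum_congr rfl hinner, sum_const, card_powersetCard, hAc, smul_eq_mul]
  rw [sum_congr rfl hstep, sum_const, card_powersetCard, card_univ, Fintype.card_fin,
    Nat.choose_symm hk, smul_eq_mul, ← mul_assoc]
  rw [mul_assoc, arith n k hk]
  ring
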